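/- Let λ be a regular uncountable cardinal, and let S ⊆ λ be stationary. Then DSR(1, S) implies Refl(ω, S): if for every sequence ⟨S_α : α < λ⟩ of stationary subsets of S there are an ordinal γ < λ of uncountable cofinality and a club F ⊆ γ such that for every α ∈ F, S_α ∩ γ is stationary in γ, then for every countable family ⟨T_n : n < ω⟩ of stationary subsets of S there is an ordinal δ < λ of uncountable cofinality such that T_n ∩ δ is stationary in δ for all n < ω. -/

import Mathlib

/-- `α` is a limit point of the set of ordinals `C`:
`α > 0` and `C ∩ α` is unbounded in `α`. -/
def IsLimitPointOf (C : Set Ordinal.{0}) (α : Ordinal.{0}) : Prop :=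
  0 < α ∧ ∀ β < α, ∃ γ ∈ C, β < γ ∧ γ < α

/-- `C` is a club (closed and unbounded) subset of the ordinal `δ`. -/
def IsClubIn (C : Set Ordinal.{0}) (δ : Ordinal.{0}) : Prop :=
  C ⊆ Set.Iio δ ∧ (∀ β < δ, ∃ γ ∈ C, β < γ) ∧ ∀ α < δ, IsLimitPointOf C α → α ∈ C

/-- `S` is stationary in `δ`: `S` meets every club subset of `δ`. -/
def IsStationaryIn (S : Set Ordinal.{0}) (δ : Ordinal.{0}) : Prop :=
  ∀ C, IsClubIn C δ → (S ∩ C).Nonempty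

namespace DSRaux

open Set Ordinal Cardinal

lemma iSup_nat_lt {δ : Ordinal.{0}} (hδ : Cardinal.aleph0 < δ.cof)
    (a : ℕ → Ordinal.{0}) (ha : ∀ n, a n < δ) : (⨆ n, a n) < δ :=
  Ordinal.iSup_lt_ord_lift (by simpa using hδ) ha

lemma isLimit_of_cof {δ : Ordinal.{0}} (hδ : Cardinal.aleph0 < δ.cof) : Order.IsSuccLimit δ :=
  Ordinal.aleph0_le_cof.mp hδ.le

/-- total picker for a club -/
lemma club_picker {δ : Ordinal.{0}} {C : Set Ordinal.{0}} (hC : IsClubIn C δ) :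
    ∃ g : Ordinal.{0} → Ordinal.{0}, ∀ b, b < δ → g b ∈ C ∧ b < g b ∧ g b < δ := by
  have h : ∀ b, ∃ x, b < δ → x ∈ C ∧ b < x ∧ x < δ := by
    intro b
    by_cases hb : b < δ
    · obtain ⟨x, hx, hbx⟩ := hC.2.1 b hb
      exact ⟨x, fun _ => ⟨hx, hbx, hC.1 hx⟩⟩
    · exact ⟨0, fun h => absurd h hb⟩
  choose g hg using h
  exact ⟨g, hg⟩

lemma club_inter {δ : Ordinal.{0}} (hδ : Cardinal.aleph0 < δ.cof)
    {C D : Set Ordinal.{0}} (hC : IsClubIn C δ) (hD : IsClubIn D δ) :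
    IsClubIn (C ∩ D) δ := by
  refine ⟨fun x hx => hC.1 hx.1, ?_, ?_⟩
  · -- unbounded
    intro b hb
    obtain ⟨gC, hgC⟩ := club_picker hC
    obtain ⟨gD, hgD⟩ := club_picker hD
    set a : ℕ → Ordinal.{0} := fun n => Nat.rec (gC b) (fun _ x => gD (gC x)) n with ha_def
    have ha0 : a 0 = gC b := rfl
    have haS : ∀ n, a (n+1) = gD (gC (a n)) := fun n => rfl
    have hlt : ∀ n, a n < δ := by
      intro n
      induction n with
      | zero => exact (hgC b hb).2.2
      | succ n ih =>
        rw [haS]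
        exact (hgD _ ((hgC _ ih).2.2)).2.2
    have hmono : ∀ n, a n < a (n+1) := by
      intro n
      rw [haS]
      exact lt_trans (hgC _ (hlt n)).2.1 (hgD _ ((hgC _ (hlt n)).2.2)).2.1
    set α := ⨆ n, a n with hα_def
    have haSup : ∀ n, a n < α := fun n => lt_of_lt_of_le (hmono n) (Ordinal.le_iSup a (n+1))
    have hαδ : α < δ := iSup_nat_lt hδ a hlt
    have hbα : b < α := lt_trans (hgC b hb).2.1 (haSup 0)
    have h0α : 0 < α := lt_of_le_of_lt (zero_le (a := b)) hbα
    have happroxC : ∀ c, c < α → ∃ x ∈ C, c < x ∧ x < α := by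
      intro c hc
      rw [hα_def, Ordinal.lt_iSup_iff] at hc
      obtain ⟨n, hn⟩ := hc
      refine ⟨gC (a n), (hgC _ (hlt n)).1, lt_trans hn (hgC _ (hlt n)).2.1, ?_⟩
      calc gC (a n) < a (n+1) := (hgD _ ((hgC _ (hlt n)).2.2)).2.1
        _ < α := haSup (n+1)
    have happroxD : ∀ c, c < α → ∃ x ∈ D, c < x ∧ x < α := by
      intro c hc
      rw [hα_def, Ordinal.lt_iSup_iff] at hc
      obtain ⟨n, hn⟩ := hc
      refine ⟨a (n+1), ?_, lt_trans hn (hmono n), haSup (n+1)⟩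
      rw [haS]
      exact (hgD _ ((hgC _ (hlt n)).2.2)).1
    have hmemC : α ∈ C := hC.2.2 α hαδ ⟨h0α, happroxC⟩
    have hmemD : α ∈ D := hD.2.2 α hαδ ⟨h0α, happroxD⟩
    exact ⟨α, ⟨hmemC, hmemD⟩, hbα⟩
  · intro α hα hlim
    have h1 : IsLimitPointOf C α := ⟨hlim.1, fun b hb => by
      obtain ⟨x, hx, hbx, hxα⟩ := hlim.2 b hb; exact ⟨x, hx.1, hbx, hxα⟩⟩
    have h2 : IsLimitPointOf D α := ⟨hlim.1, fun b hb => by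
      obtain ⟨x, hx, hbx, hxα⟩ := hlim.2 b hb; exact ⟨x, hx.2, hbx, hxα⟩⟩
    exact ⟨hC.2.2 α hα h1, hD.2.2 α hα h2⟩

end DSRaux

namespace DSRaux2
open Set Ordinal Cardinal DSRaux

lemma not_stationary_iff {N : Set Ordinal.{0}} {δ : Ordinal.{0}} :
    ¬IsStationaryIn N δ ↔ ∃ C, IsClubIn C δ ∧ N ∩ C = ∅ := by
  unfold IsStationaryIn
  push_neg
  simp [Set.not_nonempty_iff_eq_empty]

lemma stationary_mono {N M : Set Ordinal.{0}} {δ : Ordinal.{0}} (h : N ⊆ M)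
    (hN : IsStationaryIn N δ) : IsStationaryIn M δ := by
  intro C hC
  obtain ⟨x, hx1, hx2⟩ := hN C hC
  exact ⟨x, h hx1, hx2⟩

lemma stat_inter_club {δ : Ordinal.{0}} (hδ : Cardinal.aleph0 < δ.cof)
    {S C : Set Ordinal.{0}} (hS : IsStationaryIn S δ) (hC : IsClubIn C δ) :
    IsStationaryIn (S ∩ C) δ := by
  intro D hD
  obtain ⟨x, hx1, hx2⟩ := hS (C ∩ D) (club_inter hδ hC hD)
  exact ⟨x, ⟨hx1, hx2.1⟩, hx2.2⟩

lemma stat_of_subset_union {δ : Ordinal.{0}} (hδ : Cardinal.aleph0 < δ.cof)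
    {S N₁ N₂ : Set Ordinal.{0}} (hS : IsStationaryIn S δ) (hsub : S ⊆ N₁ ∪ N₂) :
    IsStationaryIn N₁ δ ∨ IsStationaryIn N₂ δ := by
  by_contra h
  push_neg at h
  obtain ⟨C₁, hC₁, hN₁⟩ := not_stationary_iff.mp h.1
  obtain ⟨C₂, hC₂, hN₂⟩ := not_stationary_iff.mp h.2
  obtain ⟨x, hxS, hxC⟩ := hS (C₁ ∩ C₂) (club_inter hδ hC₁ hC₂)
  rcases hsub hxS with hx | hx
  · have : x ∈ N₁ ∩ C₁ := ⟨hx, hxC.1⟩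
    rw [hN₁] at this
    exact this
  · have : x ∈ N₂ ∩ C₂ := ⟨hx, hxC.2⟩
    rw [hN₂] at this
    exact this

lemma club_Iio {δ : Ordinal.{0}} (hδ : Order.IsSuccLimit δ) : IsClubIn (Set.Iio δ) δ := by
  refine ⟨fun x hx => hx, fun b hb => ⟨b+1, hδ.succ_lt hb, Order.lt_succ b⟩, fun α hα _ => hα⟩

lemma limitPoint_Iio_iff {δ x : Ordinal.{0}} (hx : x < δ) :
    IsLimitPointOf (Set.Iio δ) x ↔ Order.IsSuccLimit x := by
  constructor
  · rintro ⟨h0, happ⟩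
    refine Ordinal.isSuccLimit_iff.mpr ⟨pos_iff_ne_zero.mp h0, Order.isSuccPrelimit_iff_succ_lt.mpr fun a ha => ?_⟩
    obtain ⟨y, _, hay, hyx⟩ := happ a ha
    exact lt_of_le_of_lt (Order.succ_le_of_lt hay) hyx
  · intro hlim
    exact ⟨hlim.pos, fun b hb => ⟨b+1, lt_trans (hlim.succ_lt hb) hx, Order.lt_succ b, hlim.succ_lt hb⟩⟩

/-- limit points of a club form a club -/
lemma club_lim {δ : Ordinal.{0}} (hδ : Cardinal.aleph0 < δ.cof)
    {C : Set Ordinal.{0}} (hC : IsClubIn C δ) :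
    IsClubIn {x | x < δ ∧ IsLimitPointOf C x} δ := by
  refine ⟨fun x hx => hx.1, ?_, ?_⟩
  · intro b hb
    obtain ⟨g, hg⟩ := club_picker hC
    set a : ℕ → Ordinal.{0} := fun n => Nat.rec (g b) (fun _ x => g x) n with ha_def
    have haS : ∀ n, a (n+1) = g (a n) := fun n => rfl
    have hlt : ∀ n, a n < δ := by
      intro n
      induction n with
      | zero => exact (hg b hb).2.2
      | succ n ih => rw [haS]; exact (hg _ ih).2.2
    have hmono : ∀ n, a n < a (n+1) := fun n => by rw [haS]; exact (hg _ (hlt n)).2.1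
    have hmem : ∀ n, a (n+1) ∈ C := fun n => by rw [haS]; exact (hg _ (hlt n)).1
    set α := ⨆ n, a n with hα_def
    have haSup : ∀ n, a n < α := fun n => lt_of_lt_of_le (hmono n) (Ordinal.le_iSup a (n+1))
    refine ⟨α, ⟨iSup_nat_lt hδ a hlt, ?_⟩, lt_trans (hg b hb).2.1 (haSup 0)⟩
    refine ⟨lt_of_le_of_lt zero_le (haSup 0), fun c hc => ?_⟩
    rw [hα_def, Ordinal.lt_iSup_iff] at hc
    obtain ⟨n, hn⟩ := hc
    exact ⟨a (n+1), hmem n, lt_trans hn (hmono n), haSup (n+1)⟩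
  · intro α hα hlim
    refine ⟨hα, hlim.1, fun b hb => ?_⟩
    obtain ⟨y, hy, hby, hyα⟩ := hlim.2 b hb
    obtain ⟨z, hz, hbz, hzy⟩ := hy.2.2 b hby
    exact ⟨z, hz, hbz, lt_trans hzy hyα⟩

/-- the set of limit ordinals below δ is a club (cf δ > ω) -/
lemma club_isLimit {δ : Ordinal.{0}} (hδ : Cardinal.aleph0 < δ.cof) :
    IsClubIn {x | x < δ ∧ Order.IsSuccLimit x} δ := by
  have h := club_lim hδ (club_Iio (isLimit_of_cof hδ))
  have : {x | x < δ ∧ IsLimitPointOf (Set.Iio δ) x} = {x | x < δ ∧ Order.IsSuccLimit x} := by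
    ext x
    simp only [Set.mem_setOf_eq]
    exact ⟨fun ⟨h1, h2⟩ => ⟨h1, (limitPoint_Iio_iff h1).mp h2⟩,
      fun ⟨h1, h2⟩ => ⟨h1, (limitPoint_Iio_iff h1).mpr h2⟩⟩
  rwa [this] at h

end DSRaux2

namespace DSRaux3
open Set Ordinal Cardinal DSRaux DSRaux2

section Diag

/-- diagonal intersection of clubs is a club -/
lemma club_diag {δ : Ordinal.{0}} (hδ : Cardinal.aleph0 < δ.cof)
    (hreg : ∀ a, a < δ → a.card < δ.cof) {C : Ordinal.{0} → Set Ordinal.{0}}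
    (hC : ∀ ξ, ξ < δ → IsClubIn (C ξ) δ) :
    IsClubIn {β | β < δ ∧ ∀ ξ, ξ < β → β ∈ C ξ} δ := by
  have hlimδ := isLimit_of_cof hδ
  refine ⟨fun x hx => hx.1, ?_, ?_⟩
  · -- unbounded
    intro b hb
    have H : ∀ ξ, ∃ g : Ordinal.{0} → Ordinal.{0}, ξ < δ →
        ∀ c, c < δ → (g c ∈ C ξ ∧ c < g c ∧ g c < δ) := by
      intro ξ
      by_cases hξ : ξ < δ
      · obtain ⟨g, hg⟩ := club_picker (hC ξ hξ)
        exact ⟨g, fun _ => hg⟩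
      · exact ⟨id, fun h => absurd h hξ⟩
    choose p hp using H
    set g : Ordinal.{0} → Ordinal.{0} := fun a =>
      if ha : a < δ then max (a+1) (Ordinal.bsup a (fun ξ _ => p ξ a)) else 0 with hg_def
    have hgprop : ∀ a, a < δ → (a < g a ∧ g a < δ ∧ ∀ ξ, ξ < a → p ξ a ≤ g a) := by
      intro a ha
      have hbsup : Ordinal.bsup a (fun ξ _ => p ξ a) < δ := by
        apply Ordinal.bsup_lt_ord (hreg a ha)
        intro ξ hξ
        exact (hp ξ (lt_trans hξ ha) a ha).2.2
      constructor
      · rw [hg_def]; simp only [ha, dif_pos]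
        exact lt_of_lt_of_le (Order.lt_succ a) (le_max_left _ _)
      constructor
      · rw [hg_def]; simp only [ha, dif_pos]
        exact max_lt (hlimδ.succ_lt ha) hbsup
      · intro ξ hξ
        rw [hg_def]; simp only [ha, dif_pos]
        exact le_trans (Ordinal.le_bsup (fun ξ _ => p ξ a) ξ hξ) (le_max_right _ _)
    set a : ℕ → Ordinal.{0} := fun n => Nat.rec (g b) (fun _ x => g x) n with ha_def
    have haS : ∀ n, a (n+1) = g (a n) := fun n => rfl
    have hlt : ∀ n, a n < δ := by
      intro n
      induction n with
      | zero => exact (hgprop b hb).2.1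
      | succ n ih => rw [haS]; exact (hgprop _ ih).2.1
    have hmono : ∀ n, a n < a (n+1) := fun n => by rw [haS]; exact (hgprop _ (hlt n)).1
    have hsm : StrictMono a := strictMono_nat_of_lt_succ hmono
    set α := ⨆ n, a n with hα_def
    have haSup : ∀ n, a n < α := fun n => lt_of_lt_of_le (hmono n) (Ordinal.le_iSup a (n+1))
    have hαδ : α < δ := iSup_nat_lt hδ a hlt
    have hbα : b < α := lt_trans (hgprop b hb).1 (haSup 0)
    refine ⟨α, ⟨hαδ, ?_⟩, hbα⟩
    intro ξ hξα
    have hξα' := hξα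
    rw [hα_def, Ordinal.lt_iSup_iff] at hξα'
    obtain ⟨N, hN⟩ := hξα'
    have hξδ : ξ < δ := lt_trans hξα hαδ
    apply (hC ξ hξδ).2.2 α hαδ
    refine ⟨lt_of_le_of_lt zero_le (haSup 0), fun c hc => ?_⟩
    rw [hα_def, Ordinal.lt_iSup_iff] at hc
    obtain ⟨n, hn⟩ := hc
    set m := max n N with hm_def
    have ham : a n ≤ a m := hsm.monotone (le_max_left n N)
    have haN : a N ≤ a m := hsm.monotone (le_max_right n N)
    have hξm : ξ < a m := lt_of_lt_of_le hN haN
    have hx := hp ξ hξδ (a m) (hlt m)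
    have hub : p ξ (a m) ≤ a (m+1) := by
      rw [haS]
      exact (hgprop _ (hlt m)).2.2 ξ hξm
    exact ⟨p ξ (a m), hx.1, lt_of_lt_of_le hn (le_trans ham (le_of_lt hx.2.1)),
      lt_of_le_of_lt hub (haSup (m+1))⟩
  · -- closed
    intro x hx hlim
    refine ⟨hx, fun ξ hξ => ?_⟩
    apply (hC ξ (lt_trans hξ hx)).2.2 x hx
    refine ⟨hlim.1, fun c hc => ?_⟩
    obtain ⟨y, hy, hcy, hyx⟩ := hlim.2 (max ξ c) (max_lt hξ hc)
    exact ⟨y, hy.2 ξ (lt_of_le_of_lt (le_max_left ξ c) hcy),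
      lt_of_le_of_lt (le_max_right ξ c) hcy, hyx⟩

end Diag
end DSRaux3

namespace DSRaux4
open Set Ordinal Cardinal DSRaux DSRaux2 DSRaux3

/-- Fodor's lemma -/
lemma fodor {δ : Ordinal.{0}} (hδ : Cardinal.aleph0 < δ.cof)
    (hreg : ∀ a, a < δ → a.card < δ.cof)
    {X : Set Ordinal.{0}} (hX : IsStationaryIn X δ)
    (f : Ordinal.{0} → Ordinal.{0}) (hf : ∀ α ∈ X, f α < α) :
    ∃ v, IsStationaryIn {α | α ∈ X ∧ f α = v} δ := by
  by_contra h
  push_neg at h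
  have H : ∀ v, ∃ D, IsClubIn D δ ∧ {α | α ∈ X ∧ f α = v} ∩ D = ∅ :=
    fun v => not_stationary_iff.mp (h v)
  choose D hD hDe using H
  obtain ⟨x, hxX, hxΔ⟩ := hX _ (club_diag hδ hreg (fun ξ _ => hD ξ))
  have hfx : f x < x := hf x hxX
  have hxD : x ∈ D (f x) := hxΔ.2 (f x) hfx
  have : x ∈ {α | α ∈ X ∧ f α = f x} ∩ D (f x) := ⟨⟨hxX, rfl⟩, hxD⟩
  rw [hDe] at this
  exact this

end DSRaux4

namespace DSREnum
open Set Ordinal Cardinal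

noncomputable def myEnum (U : Set Ordinal.{0}) (ξ : Ordinal.{0}) : Ordinal.{0} :=
  sInf {x | x ∈ U ∧ ∀ η, ∀ _ : η < ξ, myEnum U η < x}
termination_by ξ
decreasing_by exact ‹_›

lemma myEnum_def (U : Set Ordinal.{0}) (ξ : Ordinal.{0}) :
    myEnum U ξ = sInf {x | x ∈ U ∧ ∀ η, η < ξ → myEnum U η < x} := by
  rw [myEnum]

variable {U : Set Ordinal.{0}} {β : Ordinal.{0}}

lemma myEnum_candidates_nonempty (hIci : Set.Ici β ⊆ U) (ξ : Ordinal.{0}) :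
    {x | x ∈ U ∧ ∀ η, η < ξ → myEnum U η < x}.Nonempty := by
  set s := (⨆ η : Set.Iio ξ, myEnum U η.1) with hs_def
  refine ⟨max β (s + 1), hIci (Set.mem_Ici.mpr (le_max_left _ _)), fun η hη => ?_⟩
  have : myEnum U η ≤ s := Ordinal.le_iSup (fun η : Set.Iio ξ => myEnum U η.1) ⟨η, hη⟩
  exact lt_of_le_of_lt this (lt_of_lt_of_le (Order.lt_succ s) (le_max_right _ _))

lemma myEnum_spec (hIci : Set.Ici β ⊆ U) (ξ : Ordinal.{0}) :
    myEnum U ξ ∈ U ∧ ∀ η, η < ξ → myEnum U η < myEnum U ξ := by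
  have := csInf_mem (myEnum_candidates_nonempty hIci ξ)
  rw [← myEnum_def] at this
  exact this

lemma myEnum_le (hIci : Set.Ici β ⊆ U) {ξ x : Ordinal.{0}} (hx : x ∈ U)
    (hab : ∀ η, η < ξ → myEnum U η < x) : myEnum U ξ ≤ x := by
  rw [myEnum_def]
  exact csInf_le' ⟨hx, hab⟩

lemma myEnum_ge (hIci : Set.Ici β ⊆ U) (ξ : Ordinal.{0}) : ξ ≤ myEnum U ξ := by
  induction ξ using Ordinal.induction with
  | h ξ ih =>
    apply le_of_forall_lt
    intro a ha
    exact lt_of_le_of_lt (ih a ha) ((myEnum_spec hIci ξ).2 a ha)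

end DSREnum

namespace DSRaux5
open Set Ordinal Cardinal DSRaux DSRaux2 DSRaux3 DSRaux4

/-- if cf α = ω there is a club in α consisting of successor ordinals -/
lemma exists_succ_club {α : Ordinal.{0}} (hlim : Order.IsSuccLimit α) (hcof : α.cof = Cardinal.aleph0) :
    ∃ C : Set Ordinal.{0}, IsClubIn C α ∧ ∀ x ∈ C, ¬Order.IsSuccLimit x := by
  obtain ⟨ι, f, hlsub, hmk⟩ := Ordinal.exists_lsub_cof α
  rw [hcof, ← Cardinal.mk_nat] at hmk
  obtain ⟨q⟩ := Cardinal.eq.mp hmk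
  set f' : ℕ → Ordinal.{0} := fun n => f (q.symm n) with hf'_def
  have hf'lt : ∀ n, f' n < α := by
    intro n; rw [← hlsub]; exact Ordinal.lt_lsub f _
  have hf'unbdd : ∀ b, b < α → ∃ n, b ≤ f' n := by
    intro b hb
    by_contra hcon
    push_neg at hcon
    have : Ordinal.lsub f ≤ b := by
      apply Ordinal.lsub_le
      intro i
      simpa [hf'_def] using hcon (q i)
    exact absurd hb (not_lt.mpr (hlsub ▸ this))
  set z : ℕ → Ordinal.{0} :=
    fun n => Nat.rec (f' 0 + 1) (fun n x => max x (f' (n+1)) + 1) n with hz_def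
  have hz0 : z 0 = f' 0 + 1 := rfl
  have hzS : ∀ n, z (n+1) = max (z n) (f' (n+1)) + 1 := fun n => rfl
  have hzlt : ∀ n, z n < α := by
    intro n
    induction n with
    | zero => exact hlim.succ_lt (hf'lt 0)
    | succ n ih => rw [hzS]; exact hlim.succ_lt (max_lt ih (hf'lt (n+1)))
  have hzmono : ∀ n, z n < z (n+1) := by
    intro n
    rw [hzS]
    exact lt_of_le_of_lt (le_max_left _ _) (Order.lt_succ _)
  have hsm : StrictMono z := strictMono_nat_of_lt_succ hzmono
  have hzf : ∀ n, f' n < z n := by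
    intro n
    cases n with
    | zero => exact Order.lt_succ _
    | succ n => rw [hzS]; exact lt_of_le_of_lt (le_max_right _ _) (Order.lt_succ _)
  have hzex : ∀ n, ∃ w, z n = w + 1 := by
    intro n
    cases n with
    | zero => exact ⟨f' 0, rfl⟩
    | succ n => exact ⟨max (z n) (f' (n+1)), rfl⟩
  have hzsucc : ∀ n, ¬Order.IsSuccLimit (z n) := by
    intro n hzl
    obtain ⟨w, hw⟩ := hzex n
    rw [hw, Ordinal.add_one_eq_succ] at hzl
    exact (Order.not_isSuccLimit_succ w) hzl
  refine ⟨Set.range z, ⟨?_, ?_, ?_⟩, ?_⟩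
  · rintro x ⟨n, rfl⟩; exact hzlt n
  · intro b hb
    obtain ⟨n, hn⟩ := hf'unbdd b hb
    exact ⟨z n, ⟨n, rfl⟩, lt_of_le_of_lt hn (hzf n)⟩
  · -- closed (vacuously: no limit points below α)
    intro x hxα hlp
    exfalso
    have hall : ∀ n, z n < x := by
      intro n
      induction n with
      | zero =>
        obtain ⟨y, ⟨m, rfl⟩, _, hyx⟩ := hlp.2 0 hlp.1
        exact lt_of_le_of_lt (hsm.monotone (Nat.zero_le m)) hyx
      | succ n ih =>
        obtain ⟨y, ⟨m, rfl⟩, hzy, hyx⟩ := hlp.2 (z n) ih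
        have hnm : n < m := hsm.lt_iff_lt.mp hzy
        exact lt_of_le_of_lt (hsm.monotone hnm) hyx
    obtain ⟨n, hn⟩ := hf'unbdd x hxα
    exact absurd (lt_trans (lt_of_le_of_lt hn (hzf n)) (hall n)) (lt_irrefl x)
  · rintro x ⟨n, rfl⟩; exact hzsucc n

end DSRaux5

namespace DSRaux6
open Set Ordinal Cardinal DSRaux DSRaux2 DSRaux3 DSRaux4 DSRaux5

/-- The trace lemma: the set of points of `W` where `W` does not reflect is stationary. -/
lemma trace_stationary {Λ : Ordinal.{0}} (hΛ : Cardinal.aleph0 < Λ.cof)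
    {W : Set Ordinal.{0}} (hWsub : W ⊆ {x | x < Λ ∧ Order.IsSuccLimit x})
    (hW : IsStationaryIn W Λ) :
    IsStationaryIn {β | β ∈ W ∧ ¬IsStationaryIn (W ∩ Set.Iio β) β} Λ := by
  intro D hD
  set D' : Set Ordinal.{0} := {x | x < Λ ∧ IsLimitPointOf D x} with hD'_def
  have hD' : IsClubIn D' Λ := club_lim hΛ hD
  have hM : (W ∩ D').Nonempty := hW D' hD'
  set α := sInf (W ∩ D') with hα_def
  have hαmem : α ∈ W ∩ D' := csInf_mem hM
  have hαW : α ∈ W := hαmem.1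
  have hαΛ : α < Λ := (hWsub hαW).1
  have hαlim : Order.IsSuccLimit α := (hWsub hαW).2
  have hαD : α ∈ D := hD.2.2 α hαΛ hαmem.2.2
  have hcof : Cardinal.aleph0 ≤ α.cof := Ordinal.aleph0_le_cof.mpr hαlim
  have key : ¬IsStationaryIn (W ∩ Set.Iio α) α := by
    rcases eq_or_lt_of_le hcof with hcofeq | hcoflt
    · -- cf α = ω : use a club of successors
      obtain ⟨C, hC, hCsucc⟩ := exists_succ_club hαlim hcofeq.symm
      rw [not_stationary_iff]
      refine ⟨C, hC, ?_⟩
      ext x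
      simp only [Set.mem_inter_iff, Set.mem_empty_iff_false, iff_false, not_and]
      intro hx hxC
      exact absurd ((hWsub hx.1).2) (hCsucc x hxC)
    · -- cf α > ω
      intro hstat
      -- D ∩ Iio α is a club in α
      have hDα : IsClubIn (D ∩ Set.Iio α) α := by
        refine ⟨fun x hx => hx.2, ?_, ?_⟩
        · intro b hb
          obtain ⟨y, hy, hby, hyα⟩ := hαmem.2.2.2 b hb
          exact ⟨y, ⟨hy, hyα⟩, hby⟩
        · intro x hxα hlp
          have hlpD : IsLimitPointOf D x := by
            refine ⟨hlp.1, fun b hb => ?_⟩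
            obtain ⟨y, hy, hby, hyx⟩ := hlp.2 b hb
            exact ⟨y, hy.1, hby, hyx⟩
          exact ⟨hD.2.2 x (lt_trans hxα hαΛ) hlpD, hxα⟩
      have hL := club_lim hcoflt hDα
      obtain ⟨β, hβWα, hβL⟩ := hstat _ hL
      have hβD' : β ∈ D' := by
        refine ⟨lt_trans hβL.1 hαΛ, hβL.2.1, fun b hb => ?_⟩
        obtain ⟨y, hy, hby, hyβ⟩ := hβL.2.2 b hb
        exact ⟨y, hy.1, hby, hyβ⟩
      have : α ≤ β := csInf_le' ⟨hβWα.1, hβD'⟩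
      exact absurd hβWα.2 (not_lt.mpr this)
  exact ⟨α, ⟨hαW, key⟩, hαD⟩

end DSRaux6

namespace DSRaux7
open Set Ordinal Cardinal DSRaux DSRaux2 DSRaux3 DSRaux4 DSRaux5 DSRaux6 DSREnum

lemma club_Ioi {Λ : Ordinal.{0}} (hΛlim : Order.IsSuccLimit Λ) {a : Ordinal.{0}} (ha : a < Λ) :
    IsClubIn {x | a < x ∧ x < Λ} Λ := by
  refine ⟨fun x hx => hx.2, ?_, ?_⟩
  · intro b hb
    exact ⟨max a b + 1, ⟨lt_of_le_of_lt (le_max_left a b) (Order.lt_succ _),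
      hΛlim.succ_lt (max_lt ha hb)⟩, lt_of_le_of_lt (le_max_right a b) (Order.lt_succ _)⟩
  · intro x hx hlp
    obtain ⟨y, hy, _, hyx⟩ := hlp.2 a (by
      by_contra hax
      push_neg at hax
      obtain ⟨y, hy, h0y, hyx⟩ := hlp.2 0 hlp.1
      exact absurd (lt_of_lt_of_le hy.1 (le_trans (le_of_lt hyx) hax)) (lt_irrefl a))
    exact ⟨lt_trans hy.1 hyx, hx⟩

/-- The main splitting lemma: a stationary set has stationary "fibers" with values
unboundedly high below `Λ`. -/
lemma fibers {Λ : Ordinal.{0}} (hΛ : Cardinal.aleph0 < Λ.cof)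
    (hreg : ∀ a, a < Λ → a.card < Λ.cof)
    {X : Set Ordinal.{0}} (hX : IsStationaryIn X Λ) :
    ∃ P : Ordinal.{0} → Set Ordinal.{0}, (∀ v, P v ⊆ X) ∧
      (∀ v w, v ≠ w → ∀ x, x ∈ P v → x ∉ P w) ∧
      (∀ η, η < Λ → ∃ v, η ≤ v ∧ IsStationaryIn (P v) Λ) ∧
      (∀ v, (P v).Nonempty → v < Λ) := by
  have hΛlim := isLimit_of_cof hΛ
  -- W : limit points of X
  set W : Set Ordinal.{0} := X ∩ {x | x < Λ ∧ Order.IsSuccLimit x} with hW_def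
  have hWstat : IsStationaryIn W Λ := stat_inter_club hΛ hX (club_isLimit hΛ)
  have hWsub : W ⊆ {x | x < Λ ∧ Order.IsSuccLimit x} := fun x hx => hx.2
  set Wstar : Set Ordinal.{0} := {β | β ∈ W ∧ ¬IsStationaryIn (W ∩ Set.Iio β) β}
    with hWstar_def
  have hWstarStat : IsStationaryIn Wstar Λ := trace_stationary hΛ hWsub hWstat
  -- avoiding clubs
  have Hd : ∀ β, ∃ d : Set Ordinal.{0}, β ∈ Wstar → (IsClubIn d β ∧ d ∩ W = ∅) := by
    intro β
    by_cases hβ : β ∈ Wstar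
    · obtain ⟨C, hC, hCe⟩ := not_stationary_iff.mp hβ.2
      refine ⟨C, fun _ => ⟨hC, ?_⟩⟩
      ext x
      simp only [Set.mem_inter_iff, Set.mem_empty_iff_false, iff_false, not_and]
      intro hxC hxW
      have : x ∈ (W ∩ Set.Iio β) ∩ C := ⟨⟨hxW, hC.1 hxC⟩, hxC⟩
      rw [hCe] at this
      exact this
    · exact ⟨∅, fun h => absurd h hβ⟩
  choose d hd using Hd
  set U : Ordinal.{0} → Set Ordinal.{0} := fun β => d β ∪ Set.Ici β with hU_def
  have hIci : ∀ β, Set.Ici β ⊆ U β := fun β => Set.subset_union_right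
  set e : Ordinal.{0} → Ordinal.{0} → Ordinal.{0} := fun β ξ => myEnum (U β) ξ with he_def
  have he_mem : ∀ β ξ, e β ξ ∈ U β := fun β ξ => (myEnum_spec (hIci β) ξ).1
  have he_d : ∀ β ξ, e β ξ < β → e β ξ ∈ d β := by
    intro β ξ hlt
    rcases he_mem β ξ with h | h
    · exact h
    · exact absurd hlt (not_lt.mpr h)
  -- THE CLAIM
  have claim : ∃ ξ₀, ∀ η, η < Λ →
      IsStationaryIn {β | β ∈ Wstar ∧ e β ξ₀ < β ∧ η ≤ e β ξ₀} Λ := by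
    by_contra hcon
    push_neg at hcon
    have hcon' : ∀ ξ, ∃ η, η < Λ ∧
        ∃ C, IsClubIn C Λ ∧ {β | β ∈ Wstar ∧ e β ξ < β ∧ η ≤ e β ξ} ∩ C = ∅ := by
      intro ξ
      obtain ⟨η, hηΛ, hns⟩ := hcon ξ
      obtain ⟨C, hC, hCe⟩ := not_stationary_iff.mp hns
      exact ⟨η, hηΛ, C, hC, hCe⟩
    choose η hηΛ C hC hCe using hcon'
    -- the club D
    set Δ : Set Ordinal.{0} :=
      {β | β < Λ ∧ ∀ ξ, ξ < β → β ∈ C ξ ∩ {x | η ξ < x ∧ x < Λ}} with hΔ_def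
    have hΔclub : IsClubIn Δ Λ := by
      apply club_diag hΛ hreg
      intro ξ _
      exact club_inter hΛ (hC ξ) (club_Ioi hΛlim (hηΛ ξ))
    set D : Set Ordinal.{0} := Δ ∩ {x | x < Λ ∧ Order.IsSuccLimit x} with hD_def
    have hDclub : IsClubIn D Λ := club_inter hΛ hΔclub (club_isLimit hΛ)
    -- pick δ ∈ Wstar ∩ D
    obtain ⟨δ, hδWstar, hδD⟩ := hWstarStat D hDclub
    have hδΛ : δ < Λ := hδD.2.1
    have hδlim : Order.IsSuccLimit δ := hδD.2.2
    -- pick β ∈ Wstar above δ which is a limit point of D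
    have hclub2 : IsClubIn ({x | x < Λ ∧ IsLimitPointOf D x} ∩ {x | δ < x ∧ x < Λ}) Λ :=
      club_inter hΛ (club_lim hΛ hDclub) (club_Ioi hΛlim hδΛ)
    obtain ⟨β, hβWstar, hβmem⟩ := hWstarStat _ hclub2
    have hβΛ : β < Λ := hβmem.2.2
    have hδβ : δ < β := hβmem.2.1
    have hβD : β ∈ D := hDclub.2.2 β hβΛ hβmem.1.2
    have hβΔ : β ∈ Δ := hβD.1
    have hdβ := hd β hβWstar
    -- main induction
    have hmain : ∀ ξ, ξ < δ → e β ξ < η ξ ∧ e β ξ < δ := by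
      intro ξ hξδ
      induction ξ using Ordinal.induction with
      | h ξ ih =>
        -- guard : e β ξ < β
        have hguard : e β ξ < β := by
          obtain ⟨x, hxd, hδx⟩ := hdβ.1.2.1 δ hδβ
          have hxβ : x < β := hdβ.1.1 hxd
          have : e β ξ ≤ x := by
            apply myEnum_le (hIci β) (Set.mem_union_left _ hxd)
            intro η' hη'
            exact lt_trans (ih η' hη' (lt_trans hη' hξδ)).2 hδx
          exact lt_of_le_of_lt this hxβ
        have hβCξ : β ∈ C ξ := (hβΔ.2 ξ (lt_trans hξδ hδβ)).1
        have hηξδ : η ξ < δ := (hδD.1.2 ξ hξδ).2.1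
        -- from the disjointness
        have hne : ¬(η ξ ≤ e β ξ) := by
          intro hle
          have : β ∈ {β' | β' ∈ Wstar ∧ e β' ξ < β' ∧ η ξ ≤ e β' ξ} ∩ C ξ :=
            ⟨⟨hβWstar, hguard, hle⟩, hβCξ⟩
          rw [hCe ξ] at this
          exact this
        push_neg at hne
        exact ⟨hne, lt_trans hne hηξδ⟩
    -- the sup of the first δ values is δ
    have hlt_δ : ∀ ξ, ξ < δ → e β ξ < δ := fun ξ hξ => (hmain ξ hξ).2
    -- δ is a limit point of d β
    have hδdβ : δ ∈ d β := by
      apply hdβ.1.2.2 δ hδβ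
      refine ⟨hδlim.pos, fun b hb => ?_⟩
      have hb1 : b + 1 < δ := hδlim.succ_lt hb
      refine ⟨e β (b+1), he_d β (b+1) (lt_trans (hlt_δ _ hb1) hδβ), ?_, hlt_δ _ hb1⟩
      exact lt_of_lt_of_le (Order.lt_succ b) (myEnum_ge (hIci β) (b+1))
    have : δ ∈ d β ∩ W := ⟨hδdβ, hδWstar.1⟩
    rw [hdβ.2] at this
    exact this
  -- use the claim
  obtain ⟨ξ₀, hξ₀⟩ := claim
  refine ⟨fun v => {β | β ∈ Wstar ∧ e β ξ₀ = v ∧ v < β}, ?_, ?_, ?_, ?_⟩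
  · exact fun v β hβ => hβ.1.1.1
  · intro v w hvw x hxv hxw
    exact hvw (hxv.2.1 ▸ hxw.2.1 ▸ rfl)
  · intro ηv hηv
    have hstatG := hξ₀ ηv hηv
    obtain ⟨v, hv⟩ := fodor hΛ hreg hstatG (fun β => e β ξ₀) (fun β hβ => hβ.2.1)
    have hne : {α | α ∈ {β | β ∈ Wstar ∧ e β ξ₀ < β ∧ ηv ≤ e β ξ₀} ∧ e α ξ₀ = v}.Nonempty := by
      obtain ⟨x, hx, _⟩ := hv (Set.Iio Λ) (club_Iio hΛlim)
      exact ⟨x, hx⟩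
    obtain ⟨β₀, hβ₀⟩ := hne
    refine ⟨v, hβ₀.2 ▸ hβ₀.1.2.2, ?_⟩
    apply stationary_mono _ hv
    intro β hβ
    exact ⟨hβ.1.1, hβ.2, hβ.2 ▸ hβ.1.2.1⟩
  · rintro v ⟨β, hβ⟩
    exact lt_trans hβ.2.2 (hβ.1.1.2.1)

end DSRaux7

namespace DSRaux8
open Set Ordinal Cardinal DSRaux DSRaux2 DSRaux3 DSRaux4 DSRaux5 DSRaux6 DSRaux7

/-- veto step: carve a stationary piece out of `X` keeping countably many
stationary sets stationary. -/
lemma step_piece {Λ : Ordinal.{0}} (hΛ : Cardinal.aleph0 < Λ.cof)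
    (hreg : ∀ a, a < Λ → a.card < Λ.cof)
    {X : Set Ordinal.{0}} (hX : IsStationaryIn X Λ)
    (Z : ℕ → Set Ordinal.{0}) (hZ : ∀ n, IsStationaryIn (Z n) Λ) :
    ∃ P : Set Ordinal.{0}, P ⊆ X ∧ IsStationaryIn P Λ ∧
      ∀ n, IsStationaryIn (Z n \ P) Λ := by
  have hΛlim := isLimit_of_cof hΛ
  obtain ⟨f, hfsub, hfdisj, hfvals, hfbd⟩ := fibers hΛ hreg hX
  set BAD : ℕ → Set Ordinal.{0} := fun n => {v | ¬IsStationaryIn (Z n \ f v) Λ} with hBAD_def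
  have hBADsingle : ∀ n v w, v ∈ BAD n → w ∈ BAD n → v = w := by
    intro n v w hv hw
    by_contra hvw
    have hsub : Z n ⊆ (Z n \ f v) ∪ (Z n \ f w) := by
      intro x hx
      by_cases hxv : x ∈ f v
      · exact Or.inr ⟨hx, hfdisj v w hvw x hxv⟩
      · exact Or.inl ⟨hx, hxv⟩
    rcases stat_of_subset_union hΛ (hZ n) hsub with h | h
    · exact hv h
    · exact hw h
  have hBADlt : ∀ n v, v ∈ BAD n → v < Λ := by
    intro n v hv
    apply hfbd
    by_contra hne
    rw [Set.not_nonempty_iff_eq_empty] at hne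
    have : Z n \ f v = Z n := by rw [hne]; simp
    rw [hBAD_def] at hv
    simp only [Set.mem_setOf_eq, this] at hv
    exact hv (hZ n)
  classical
  set b : ℕ → Ordinal.{0} := fun n => if h : (BAD n).Nonempty then h.choose else 0 with hb_def
  have hbBAD : ∀ n, BAD n ⊆ {b n} := by
    intro n v hv
    have hne : (BAD n).Nonempty := ⟨v, hv⟩
    have := hne.choose_spec
    simp only [hb_def, hne, dif_pos]
    exact Set.mem_singleton_iff.mpr (hBADsingle n v _ hv this)
  have hblt : ∀ n, b n < Λ := by
    intro n
    by_cases h : (BAD n).Nonempty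
    · have : b n ∈ BAD n := by
        simp only [hb_def, h, dif_pos]
        exact h.choose_spec
      exact hBADlt n _ this
    · simp only [hb_def, h, dif_neg, not_false_iff]
      exact hΛlim.pos
  set s := ⨆ n, b n with hs_def
  have hsΛ : s < Λ := iSup_nat_lt hΛ b hblt
  obtain ⟨v, hvs, hvstat⟩ := hfvals (s + 1) (hΛlim.succ_lt hsΛ)
  refine ⟨f v, hfsub v, hvstat, ?_⟩
  intro n
  by_contra hns
  have hvBAD : v ∈ BAD n := hns
  have : v = b n := Set.mem_singleton_iff.mp (hbBAD n hvBAD)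
  have hle : v ≤ s := this ▸ Ordinal.le_iSup b n
  exact absurd (lt_of_lt_of_le (lt_of_le_of_lt hle (Order.lt_succ s)) hvs) (lt_irrefl v)

end DSRaux8

namespace DSRaux9
open Set Ordinal Cardinal DSRaux DSRaux2 DSRaux3 DSRaux4 DSRaux5 DSRaux6 DSRaux7 DSRaux8
open scoped Classical

noncomputable def pieceSeq (Λ : Ordinal.{0}) (T : ℕ → Set Ordinal.{0}) (ν : ℕ → ℕ) :
    ℕ → Set Ordinal.{0}
  | m =>
    if h : ∃ P : Set Ordinal.{0},
        P ⊆ T (ν m) \ (⋃ j : {j : ℕ // j < m}, pieceSeq Λ T ν j.1) ∧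
        IsStationaryIn P Λ ∧
        ∀ n, IsStationaryIn (T n \ ((⋃ j : {j : ℕ // j < m}, pieceSeq Λ T ν j.1) ∪ P)) Λ
    then h.choose else ∅
termination_by m => m
decreasing_by all_goals exact j.2

noncomputable def prevSet (Λ : Ordinal.{0}) (T : ℕ → Set Ordinal.{0}) (ν : ℕ → ℕ) (m : ℕ) :
    Set Ordinal.{0} :=
  ⋃ j : {j : ℕ // j < m}, pieceSeq Λ T ν j.1

lemma pieceSeq_eq (Λ : Ordinal.{0}) (T : ℕ → Set Ordinal.{0}) (ν : ℕ → ℕ) (m : ℕ) :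
    pieceSeq Λ T ν m =
      if h : ∃ P : Set Ordinal.{0},
          P ⊆ T (ν m) \ prevSet Λ T ν m ∧
          IsStationaryIn P Λ ∧
          ∀ n, IsStationaryIn (T n \ (prevSet Λ T ν m ∪ P)) Λ
      then h.choose else ∅ := by
  rw [pieceSeq]
  rfl

lemma prevSet_zero (Λ T ν) : prevSet Λ T ν 0 = ∅ := by
  unfold prevSet
  ext x
  simp only [Set.mem_iUnion, Set.mem_empty_iff_false, iff_false, not_exists]
  exact fun j => absurd j.2 (Nat.not_lt_zero j.1)

lemma prevSet_succ (Λ T ν m) :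
    prevSet Λ T ν (m+1) = prevSet Λ T ν m ∪ pieceSeq Λ T ν m := by
  unfold prevSet
  ext x
  simp only [Set.mem_iUnion, Set.mem_union]
  constructor
  · rintro ⟨⟨j, hj⟩, hx⟩
    rcases Nat.lt_succ_iff_lt_or_eq.mp hj with h | h
    · exact Or.inl ⟨⟨j, h⟩, hx⟩
    · subst h; exact Or.inr hx
  · rintro (⟨⟨j, hj⟩, hx⟩ | hx)
    · exact ⟨⟨j, Nat.lt_succ_of_lt hj⟩, hx⟩
    · exact ⟨⟨m, Nat.lt_succ_self m⟩, hx⟩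

lemma pieceSeq_props {Λ : Ordinal.{0}} (hΛ : Cardinal.aleph0 < Λ.cof)
    (hreg : ∀ a, a < Λ → a.card < Λ.cof)
    {T : ℕ → Set Ordinal.{0}} (hT : ∀ n, IsStationaryIn (T n) Λ) (ν : ℕ → ℕ) :
    ∀ m, (∀ n, IsStationaryIn (T n \ prevSet Λ T ν m) Λ) ∧
      pieceSeq Λ T ν m ⊆ T (ν m) \ prevSet Λ T ν m ∧
      IsStationaryIn (pieceSeq Λ T ν m) Λ := by
  have key : ∀ m, (∀ n, IsStationaryIn (T n \ prevSet Λ T ν m) Λ) →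
      ∃ P : Set Ordinal.{0},
        P ⊆ T (ν m) \ prevSet Λ T ν m ∧
        IsStationaryIn P Λ ∧
        ∀ n, IsStationaryIn (T n \ (prevSet Λ T ν m ∪ P)) Λ := by
    intro m hinv
    obtain ⟨P, hPsub, hPstat, hPkeep⟩ :=
      step_piece hΛ hreg (hinv (ν m)) (fun n => T n \ prevSet Λ T ν m) hinv
    refine ⟨P, ?_, hPstat, ?_⟩
    · intro x hx
      exact hPsub hx
    · intro n
      have : T n \ (prevSet Λ T ν m ∪ P) = (T n \ prevSet Λ T ν m) \ P := by
        rw [Set.diff_diff]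
      rw [this]
      exact hPkeep n
  have inv : ∀ m, ∀ n, IsStationaryIn (T n \ prevSet Λ T ν m) Λ := by
    intro m
    induction m with
    | zero =>
      intro n
      rw [prevSet_zero]
      simpa using hT n
    | succ m ih =>
      intro n
      have hEx := key m ih
      rw [prevSet_succ]
      have hPm : pieceSeq Λ T ν m = hEx.choose := by
        rw [pieceSeq_eq, dif_pos hEx]
      rw [hPm]
      exact hEx.choose_spec.2.2 n
  intro m
  have hEx := key m (inv m)
  have hPm : pieceSeq Λ T ν m = hEx.choose := by
    rw [pieceSeq_eq, dif_pos hEx]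
  exact ⟨inv m, hPm ▸ hEx.choose_spec.1, hPm ▸ hEx.choose_spec.2.1⟩

lemma pieceSeq_disjoint {Λ : Ordinal.{0}} (hΛ : Cardinal.aleph0 < Λ.cof)
    (hreg : ∀ a, a < Λ → a.card < Λ.cof)
    {T : ℕ → Set Ordinal.{0}} (hT : ∀ n, IsStationaryIn (T n) Λ) (ν : ℕ → ℕ) :
    ∀ j m, j < m → ∀ x, x ∈ pieceSeq Λ T ν j → x ∉ pieceSeq Λ T ν m := by
  intro j m hjm x hxj hxm
  have h := (pieceSeq_props hΛ hreg hT ν m).2.1 hxm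
  apply h.2
  unfold prevSet
  rw [Set.mem_iUnion]
  exact ⟨⟨j, hjm⟩, hxj⟩

end DSRaux9


open Set Ordinal Cardinal DSRaux DSRaux2 DSRaux9 in
/-- For a regular uncountable cardinal `λ` and stationary `S ⊆ λ`,
`DSR(1, S)` implies `Refl(ω, S)`. -/
theorem DSR_one_implies_Refl_omega (lam : Cardinal.{0})
    (hreg : lam.IsRegular) (hunc : Cardinal.aleph0 < lam)
    (S : Set Ordinal.{0}) (hSsub : S ⊆ Set.Iio lam.ord)
    (hSstat : IsStationaryIn S lam.ord)
    (hdsr : ∀ T : Ordinal.{0} → Set Ordinal.{0},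
      (∀ α < lam.ord, T α ⊆ S ∧ IsStationaryIn (T α) lam.ord) →
      ∃ γ < lam.ord, Cardinal.aleph0 < γ.cof ∧
        ∃ F, IsClubIn F γ ∧ ∀ α ∈ F, IsStationaryIn (T α ∩ Set.Iio γ) γ) :
    ∀ T : ℕ → Set Ordinal.{0},
      (∀ n, T n ⊆ S ∧ IsStationaryIn (T n) lam.ord) →
      ∃ δ < lam.ord, Cardinal.aleph0 < δ.cof ∧
        ∀ n, IsStationaryIn (T n ∩ Set.Iio δ) δ := by
  classical
  intro T hT
  set Λ := lam.ord with hΛ_def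
  have hΛcof : Cardinal.aleph0 < Λ.cof := by
    rw [hΛ_def, hreg.cof_eq]
    exact hunc
  have hΛreg : ∀ a, a < Λ → a.card < Λ.cof := by
    intro a ha
    rw [hΛ_def, hreg.cof_eq]
    exact Cardinal.lt_ord.mp ha
  set ν : ℕ → ℕ := fun m => (Nat.unpair m).1 with hν_def
  have hTstat : ∀ n, IsStationaryIn (T n) Λ := fun n => (hT n).2
  set P : ℕ → Set Ordinal.{0} := pieceSeq Λ T ν with hP_def
  have hprops := pieceSeq_props hΛcof hΛreg hTstat ν
  have hdisj := pieceSeq_disjoint hΛcof hΛreg hTstat ν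
  have hPsubT : ∀ m, P m ⊆ T (ν m) := fun m x hx => ((hprops m).2.1 hx).1
  have hPstat : ∀ m, IsStationaryIn (P m) Λ := fun m => (hprops m).2.2
  set Tseq : Ordinal.{0} → Set Ordinal.{0} :=
    fun α => if h : ∃ m, α ∈ P m then P (Nat.find h + 1) else P 0 with hTseq_def
  have hTseqP : ∀ α, ∃ j, Tseq α = P j := by
    intro α
    by_cases h : ∃ m, α ∈ P m
    · exact ⟨Nat.find h + 1, by rw [hTseq_def]; simp only [h, dif_pos]⟩
    · exact ⟨0, by rw [hTseq_def]; simp only [h, dif_neg, not_false_iff]⟩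
  have hTseqlegal : ∀ α, α < Λ → Tseq α ⊆ S ∧ IsStationaryIn (Tseq α) Λ := by
    intro α _
    obtain ⟨j, hj⟩ := hTseqP α
    rw [hj]
    exact ⟨fun x hx => (hT (ν j)).1 (hPsubT j hx), hPstat j⟩
  obtain ⟨γ, hγΛ, hγcof, F, hF, hFstat⟩ := hdsr Tseq hTseqlegal
  -- base
  have hγpos : (0 : Ordinal.{0}) < γ := (isLimit_of_cof hγcof).pos
  obtain ⟨α₀, hα₀F, _⟩ := hF.2.1 0 hγpos
  have hbase : ∃ j, IsStationaryIn (P j ∩ Set.Iio γ) γ := by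
    obtain ⟨j, hj⟩ := hTseqP α₀
    exact ⟨j, hj ▸ hFstat α₀ hα₀F⟩
  obtain ⟨j₀, hj₀⟩ := hbase
  -- climb
  have hclimb : ∀ m, IsStationaryIn (P m ∩ Set.Iio γ) γ →
      IsStationaryIn (P (m+1) ∩ Set.Iio γ) γ := by
    intro m hm
    obtain ⟨x, hxPγ, hxF⟩ := hm F hF
    have hmem : ∃ m', x ∈ P m' := ⟨m, hxPγ.1⟩
    have hfind : Nat.find hmem = m := by
      have h1 : Nat.find hmem ≤ m := Nat.find_min' hmem hxPγ.1
      rcases Nat.lt_or_ge (Nat.find hmem) m with h | h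
      · exact absurd hxPγ.1 (hdisj (Nat.find hmem) m h x (Nat.find_spec hmem))
      · exact le_antisymm h1 h
    have hTx : Tseq x = P (m+1) := by
      rw [hTseq_def]
      simp only [hmem, dif_pos]
      rw [hfind]
    have := hFstat x hxF
    rwa [hTx] at this
  have hall : ∀ m, j₀ ≤ m → IsStationaryIn (P m ∩ Set.Iio γ) γ := by
    intro m hm
    induction m, hm using Nat.le_induction with
    | base => exact hj₀
    | succ m hm ih => exact hclimb m ih
  refine ⟨γ, hγΛ, hγcof, ?_⟩
  intro n
  set m := Nat.pair n j₀ with hm_def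
  have hνm : ν m = n := by
    rw [hν_def, hm_def]
    simp [Nat.unpair_pair]
  have hmj₀ : j₀ ≤ m := Nat.right_le_pair n j₀
  apply stationary_mono _ (hall m hmj₀)
  intro x hx
  exact ⟨hνm ▸ hPsubT m hx.1, hx.2⟩
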